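/- Let f, g : ℕ → ℂ with g of range Q (g(m) = ∑_{d|m, d ≤ Q} g'(d)) and N ∈ ℕ fixed. Then a ↦ C_{f,g}(N,a) = ∑_{n ≤ N} f(n) g(n+a) is a periodic function of a with period dividing lcm(2,3,…,Q); in particular it is bounded in a. -/
import Mathlib

open scoped BigOperators
open ArithmeticFunction

/-- `n` is `Q`-smooth: every prime factor of `n` is `≤ Q`. -/
def QSmooth (Q n : ℕ) : Prop := ∀ p ∈ n.primeFactors, p ≤ Q
instance (Q n : ℕ) : Decidable (QSmooth Q n) := by unfold QSmooth; infer_instance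
/-- `n` is `Q`-sifted: coprime to every prime `≤ Q`. -/
def QSifted (Q n : ℕ) : Prop := ∀ p ∈ n.primeFactors, Q < p
instance (Q n : ℕ) : Decidable (QSifted Q n) := by unfold QSifted; infer_instance
/-- Eratosthenes transform `F' = F ∗ μ`. -/
noncomputable def era (F : ℕ → ℂ) (d : ℕ) : ℂ :=
  ∑ t ∈ d.divisors, F t * (moebius (d / t) : ℤ)
/-- Ramanujan sum `c_q(n) = ∑_{d ∣ (q,n)} d μ(q/d)`. -/
def ramanujanSum (q n : ℕ) : ℤ :=
  ∑ d ∈ (Nat.gcd q n).divisors, (d : ℤ) * moebius (q / d)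

/-- Proposition 1(ii): if `g` has range `Q`, then `a ↦ C_{f,g}(N,a)` is periodic
with period dividing `lcm(2,…,Q)`, and in particular bounded. -/
theorem correlation_periodic_bounded (f g : ℕ → ℂ) (Q N : ℕ)
    (hg : ∀ m : ℕ, 0 < m → g m = ∑ d ∈ m.divisors.filter (fun d => d ≤ Q), era g d) :
    Function.Periodic (fun a : ℕ => ∑ n ∈ Finset.Icc 1 N, f n * g (n + a))
        ((Finset.Icc 1 Q).lcm (fun n => n)) ∧
      ∃ B : ℝ, ∀ a : ℕ, 0 < a →
        ‖∑ n ∈ Finset.Icc 1 N, f n * g (n + a)‖ ≤ B := by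

  set L := (Finset.Icc 1 Q).lcm (fun n => n) with hLdef
  have hdvd : ∀ d : ℕ, 0 < d → d ≤ Q → d ∣ L := by
    intro d hd hdQ
    exact Finset.dvd_lcm (Finset.mem_Icc.mpr ⟨hd, hdQ⟩)
  have hL : 0 < L := Nat.pos_of_ne_zero (fun h => by
    have h0 := Finset.lcm_eq_zero_iff.mp h
    simp [Set.mem_image] at h0)
  have gper : ∀ m : ℕ, 0 < m → g (m + L) = g m := by
    intro m hm
    rw [hg m hm, hg (m + L) (by omega)]
    apply Finset.sum_congr _ (fun _ _ => rfl)
    ext d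
    simp only [Finset.mem_filter, Nat.mem_divisors]
    constructor
    · rintro ⟨⟨hd1, hd2⟩, hd3⟩
      have hdpos : 0 < d := Nat.pos_of_dvd_of_pos hd1 (by omega)
      exact ⟨⟨(Nat.dvd_add_right (hdvd d hdpos hd3)).mp (by rwa [Nat.add_comm] at hd1),
        by omega⟩, hd3⟩
    · rintro ⟨⟨hd1, hd2⟩, hd3⟩
      have hdpos : 0 < d := Nat.pos_of_dvd_of_pos hd1 hm
      exact ⟨⟨Nat.dvd_add hd1 (hdvd d hdpos hd3), by omega⟩, hd3⟩
  have hper : Function.Periodic (fun a : ℕ => ∑ n ∈ Finset.Icc 1 N, f n * g (n + a)) L := by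
    intro a
    apply Finset.sum_congr rfl
    intro n hn
    have hn1 : 1 ≤ n := (Finset.mem_Icc.mp hn).1
    have : n + (a + L) = (n + a) + L := by ring
    rw [this, gper (n + a) (by omega)]
  refine ⟨hper, ∑ a ∈ Finset.range L, ‖∑ n ∈ Finset.Icc 1 N, f n * g (n + a)‖, ?_⟩
  intro a _
  have := hper.map_mod_nat a
  calc ‖∑ n ∈ Finset.Icc 1 N, f n * g (n + a)‖
      = ‖∑ n ∈ Finset.Icc 1 N, f n * g (n + a % L)‖ := by rw [this]
    _ ≤ _ := Finset.single_le_sum (f := fun a => ‖∑ n ∈ Finset.Icc 1 N, f n * g (n + a)‖)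
        (fun _ _ => norm_nonneg _) (Finset.mem_range.mpr (Nat.mod_lt a hL))
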